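/- The McCormick relaxation gap of the lower envelope is bounded: for x ∈ [x̲,x̄], y ∈ [y̲,ȳ], the difference xy − max(x̲y + xy̲ − x̲y̲, x̄y + xȳ − x̄ȳ) is at most (x̄ − x̲)(ȳ − y̲)/4. -/
import Mathlib

lemma min_prod_bound (p q r s : ℝ) (hp : 0 ≤ p) (hq : 0 ≤ q) (hr : 0 ≤ r) (hs : 0 ≤ s)
    (h : p * q ≤ r * s) : p * q ≤ (p + r) * (q + s) / 4 := by
  nlinarith [sq_nonneg (p * s - r * q), mul_nonneg hp hs, mul_nonneg hr hq,
    mul_nonneg (mul_nonneg hp hq) (sub_nonneg.2 h), sq_nonneg (p*q - r*s)]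

theorem mccormick_gap_bound
    (x y lx ux ly uy : ℝ)
    (hx1 : lx ≤ x) (hx2 : x ≤ ux) (hy1 : ly ≤ y) (hy2 : y ≤ uy) :
    x * y - max (lx * y + x * ly - lx * ly) (ux * y + x * uy - ux * uy)
      ≤ (ux - lx) * (uy - ly) / 4 := by
  rcases le_total (lx * y + x * ly - lx * ly) (ux * y + x * uy - ux * uy) with h | h
  · rw [max_eq_right h]
    have := min_prod_bound (ux - x) (uy - y) (x - lx) (y - ly)
      (by linarith) (by linarith) (by linarith) (by linarith) (by nlinarith)
    nlinarith
  · rw [max_eq_left h]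
    have := min_prod_bound (x - lx) (y - ly) (ux - x) (uy - y)
      (by linarith) (by linarith) (by linarith) (by linarith) (by nlinarith)
    nlinarith
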